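/- (Crucial edge case.) Let G ∈ Γ_{n,k} be strongly connected (every ordered pair of vertices is joined by a directed path) and let e = [ab] ∈ G be a crucial edge, i.e. the graph G∖e obtained by deleting e is not strongly connected. Then ∑_{H⊆G, e∉H} α(H) = 0 and ∑_{H⊆G, e∈H} α(H) = (−1)^k σ(G) = (−1)^{k+β₁(G)}. -/

import Mathlib

open Finset

open scoped Classical Nat

noncomputable section

/-- A directed graph with `n` labeled vertices and `k` labeled edges:
the `ℓ`-th edge is the ordered pair `G ℓ = (a, b)` (an edge from `a` to `b`; loops allowed). -/
abbrev DG (n k : ℕ) := Fin k → Fin n × Fin n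

namespace DG

variable {n k : ℕ}

/-- `step G S a b`: the subgraph of `G` with edge-label set `S` has an edge from `a` to `b`. -/
def step (G : DG n k) (S : Finset (Fin k)) (a b : Fin n) : Prop :=
  ∃ e ∈ S, G e = (a, b)

/-- The subgraph of `G` with edge-label set `S` contains no directed cycle. -/
def Acyclic (G : DG n k) (S : Finset (Fin k)) : Prop :=
  ∀ a : Fin n, ¬ Relation.TransGen (step G S) a a

/-- The edge `e` lies on a directed cycle of the subgraph of `G` with edge set `S`
(equivalently, there is a directed path from the head of `e` back to its tail). -/
def OnCycle (G : DG n k) (S : Finset (Fin k)) (e : Fin k) : Prop :=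
  Relation.ReflTransGen (step G S) (G e).2 (G e).1

/-- Strongly semiconnected: every edge lies on a directed cycle. -/
def SSC (G : DG n k) (S : Finset (Fin k)) : Prop :=
  ∀ e ∈ S, OnCycle G S e

/-- Strongly connected: every ordered pair of vertices is joined by a directed path. -/
def StronglyConnected (G : DG n k) (S : Finset (Fin k)) : Prop :=
  ∀ a b : Fin n, Relation.ReflTransGen (step G S) a b

/-- Adjacency in the underlying undirected graph. -/
def adj (G : DG n k) (S : Finset (Fin k)) (a b : Fin n) : Prop :=
  ∃ e ∈ S, G e = (a, b) ∨ G e = (b, a)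

/-- `β₀`: the number of connected components of the underlying undirected graph
(isolated vertices count as components). -/
def beta0 (G : DG n k) (S : Finset (Fin k)) : ℕ :=
  Nat.card (Quot (adj G S))

/-- `α(H) = (−1)^{#edges}` if `H` is acyclic, `0` otherwise. -/
def alpha (G : DG n k) (S : Finset (Fin k)) : ℤ :=
  if Acyclic G S then (-1) ^ S.card else 0

/-- `σ(H) = (−1)^{β₁}` if `H` is strongly semiconnected, `0` otherwise;
here `β₁ = #edges − n + β₀`, and `(−1)^{#edges − n + β₀} = (−1)^{#edges + n + β₀}`. -/
def sigma (G : DG n k) (S : Finset (Fin k)) : ℤ :=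
  if SSC G S then (-1) ^ (S.card + n + beta0 G S) else 0

/-- The vertex `v` is isolated: incident to no edge. -/
def isolated (G : DG n k) (v : Fin n) : Prop :=
  ∀ e : Fin k, (G e).1 ≠ v ∧ (G e).2 ≠ v

/-- The vertex `v` is a sink: no edge starts at it. -/
def isSink (G : DG n k) (v : Fin n) : Prop :=
  ∀ e : Fin k, (G e).1 ≠ v

end DG

section Aux

open DG Relation

variable {n k : ℕ}

lemma step_mono (G : DG n k) {S T : Finset (Fin k)} (h : S ⊆ T) :
    ∀ a b, step G S a b → step G T a b := by
  rintro a b ⟨g, hg, hge⟩; exact ⟨g, h hg, hge⟩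

lemma acyclic_mono (G : DG n k) {S T : Finset (Fin k)} (h : S ⊆ T)
    (hT : Acyclic G T) : Acyclic G S :=
  fun a hc => hT a (TransGen.mono (step_mono G h) _ _ hc)

lemma acyclic_empty (G : DG n k) : Acyclic G (∅ : Finset (Fin k)) := by
  intro a h
  cases h with
  | single h => obtain ⟨g, hg, -⟩ := h; exact absurd hg (Finset.notMem_empty g)
  | tail _ h => obtain ⟨g, hg, -⟩ := h; exact absurd hg (Finset.notMem_empty g)

lemma alpha_empty (G : DG n k) : alpha G (∅ : Finset (Fin k)) = 1 := by
  rw [alpha, if_pos (acyclic_empty G)]; simp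

lemma acyclic_insert (G : DG n k) {f : Fin k} {T : Finset (Fin k)} (hf : f ∉ T)
    (hnr : ¬ ReflTransGen (step G T) (G f).2 (G f).1) (hT : Acyclic G T) :
    Acyclic G (insert f T) := by
  have key : ∀ x y : Fin n, ReflTransGen (step G (insert f T)) x y →
      ReflTransGen (step G T) x y ∨
        (ReflTransGen (step G T) x (G f).1 ∧ ReflTransGen (step G T) (G f).2 y) := by
    intro x y hxy
    induction hxy using ReflTransGen.head_induction_on with
    | refl => exact Or.inl ReflTransGen.refl
    | head hstep htl ih =>
      obtain ⟨g, hg, hge⟩ := hstep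
      rcases Finset.mem_insert.mp hg with rfl | hgT
      · have h1 : (G g).1 = _ := congrArg Prod.fst hge
        have h2 : (G g).2 = _ := congrArg Prod.snd hge
        rcases ih with h | ⟨h, -⟩
        · exact Or.inr ⟨h1 ▸ ReflTransGen.refl, h2 ▸ h⟩
        · exact absurd (h2 ▸ h) hnr
      · rcases ih with h | ⟨h, h'⟩
        · exact Or.inl (h.head ⟨g, hgT, hge⟩)
        · exact Or.inr ⟨h.head ⟨g, hgT, hge⟩, h'⟩
  intro v hv
  obtain ⟨w, hvw, hwv⟩ := (Relation.TransGen.head'_iff).mp hv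
  obtain ⟨g, hg, hge⟩ := hvw
  have h1 : (G g).1 = v := congrArg Prod.fst hge
  have h2 : (G g).2 = w := congrArg Prod.snd hge
  rcases Finset.mem_insert.mp hg with rfl | hgT
  · rcases key w v hwv with h | ⟨h, -⟩
    · exact hnr (h2 ▸ h1 ▸ h)
    · exact hnr (h2 ▸ h)
  · rcases key w v hwv with h | ⟨h, h'⟩
    · exact hT v (Relation.TransGen.head' ⟨g, hgT, hge⟩ h)
    · exact hnr (h'.trans ((ReflTransGen.single ⟨g, hgT, hge⟩).trans h))

lemma alpha_insert (G : DG n k) {f : Fin k} {T : Finset (Fin k)} (hf : f ∉ T)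
    (hnr : ¬ ReflTransGen (step G T) (G f).2 (G f).1) :
    alpha G (insert f T) = - alpha G T := by
  unfold alpha
  by_cases h : Acyclic G T
  · rw [if_pos h, if_pos (acyclic_insert G hf hnr h), Finset.card_insert_of_notMem hf,
      pow_succ]
    ring
  · rw [if_neg h, if_neg (fun hc => h (acyclic_mono G (Finset.subset_insert f T) hc)), neg_zero]

lemma sum_alpha_zero (G : DG n k) (f : Fin k) (P : Finset (Fin k) → Prop) [DecidablePred P]
    (hPi : ∀ T, P T → P (insert f T)) (hPe : ∀ T, P T → P (T.erase f))
    (hnr : ∀ T, P T → f ∉ T → ¬ ReflTransGen (step G T) (G f).2 (G f).1) :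
    ∑ T ∈ Finset.univ.filter P, alpha G T = 0 := by
  apply Finset.sum_involution (fun T _ => if f ∈ T then T.erase f else insert f T)
  case hg₁ =>
    intro T hT
    have hPT : P T := (Finset.mem_filter.mp hT).2
    by_cases hfT : f ∈ T
    · simp only [if_pos hfT]
      have h1 : f ∉ T.erase f := Finset.notMem_erase f T
      have h2 := alpha_insert G h1 (hnr _ (hPe T hPT) h1)
      rw [Finset.insert_erase hfT] at h2
      rw [h2]; ring
    · simp only [if_neg hfT]
      rw [alpha_insert G hfT (hnr T hPT hfT)]; ring
  case hg₃ =>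
    intro T _ _
    by_cases hfT : f ∈ T
    · simp only [if_pos hfT]
      intro hEq; exact Finset.notMem_erase f T (by rw [hEq]; exact hfT)
    · simp only [if_neg hfT]
      intro hEq; exact hfT (hEq ▸ Finset.mem_insert_self f T)
  case g_mem =>
    intro T hT
    have hPT : P T := (Finset.mem_filter.mp hT).2
    by_cases hfT : f ∈ T
    · simp only [if_pos hfT, Finset.mem_filter]
      exact ⟨Finset.mem_univ _, hPe T hPT⟩
    · simp only [if_neg hfT, Finset.mem_filter]
      exact ⟨Finset.mem_univ _, hPi T hPT⟩
  case hg₄ =>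
    intro T hT
    by_cases hfT : f ∈ T
    · have h1 : f ∉ T.erase f := Finset.notMem_erase f T
      simp only [if_pos hfT, if_neg h1, Finset.insert_erase hfT]
    · have h1 : f ∈ insert f T := Finset.mem_insert_self f T
      simp only [if_neg hfT, if_pos h1, Finset.erase_insert hfT]


lemma exists_source (G : DG n k) (hn : 1 ≤ n) {T : Finset (Fin k)} (hT : Acyclic G T) :
    ∃ v : Fin n, ∀ g ∈ T, (G g).2 ≠ v := by
  by_contra h
  push_neg at h
  choose ge hge1 hge2 using h
  set prev : Fin n → Fin n := fun v => (G (ge v)).1 with hprev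
  have hstep : ∀ v, step G T (prev v) v := by
    intro v
    refine ⟨ge v, hge1 v, ?_⟩
    have : G (ge v) = ((G (ge v)).1, (G (ge v)).2) := rfl
    rw [this, hge2 v]
  set u0 : Fin n := ⟨0, hn⟩
  set seq : ℕ → Fin n := fun m => prev^[m] u0 with hseq
  have hsucc : ∀ m, step G T (seq (m+1)) (seq m) := by
    intro m
    have h1 : seq (m+1) = prev (seq m) := Function.iterate_succ_apply' prev m u0
    rw [h1]; exact hstep (seq m)
  have htrans : ∀ i j, i < j → Relation.TransGen (step G T) (seq j) (seq i) := by
    intro i j hij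
    induction j with
    | zero => omega
    | succ m ih =>
      rcases Nat.lt_succ_iff_lt_or_eq.mp hij with h | rfl
      · exact (Relation.TransGen.single (hsucc m)).trans (ih h)
      · exact Relation.TransGen.single (hsucc i)
  obtain ⟨i, j, hne, heq⟩ := Fintype.exists_ne_map_eq_of_card_lt
    (fun i : Fin (n+1) => seq i) (by simp)
  rcases lt_or_gt_of_ne (fun h : (i:ℕ) = (j:ℕ) => hne (Fin.ext h)) with h | h
  · exact hT (seq i) (heq ▸ htrans i j h)
  · exact hT (seq j) (heq ▸ htrans j i h)

lemma mem_of_rtg_heads (G : DG n k) {U : Finset (Fin n)} {T : Finset (Fin k)}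
    (hheads : ∀ g ∈ T, (G g).2 ∉ U) {x y : Fin n}
    (hxy : Relation.ReflTransGen (step G T) x y) : y ∈ U → x ∈ U := by
  induction hxy with
  | refl => exact id
  | tail _ hbc ih =>
    intro hy
    obtain ⟨g, hg, hge⟩ := hbc
    have h2 := hheads g hg
    rw [hge] at h2
    exact absurd hy h2

lemma exists_crossing (G : DG n k) {U : Finset (Fin n)} {u v : Fin n} {S : Finset (Fin k)}
    (huv : Relation.ReflTransGen (step G S) u v) (hu : u ∈ U) :
    v ∉ U → ∃ g : Fin k, (G g).1 ∈ U ∧ (G g).2 ∉ U := by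
  induction huv with
  | refl => exact fun hv => absurd hu hv
  | @tail b c hab hbc ih =>
    intro hv
    by_cases hb : b ∈ U
    · obtain ⟨g, hg, hge⟩ := hbc
      refine ⟨g, ?_, ?_⟩
      · rw [hge]; exact hb
      · rw [hge]; exact hv
    · exact ih hb

private def cw (G : DG n k) (U : Finset (Fin n)) (T : Finset (Fin k)) : ℤ :=
  if U.Nonempty ∧ ∀ g ∈ T, (G g).2 ∉ U then (-1)^(U.card+1) * alpha G T else 0

lemma cw_row (G : DG n k) (hn : 1 ≤ n) (T : Finset (Fin k)) :
    alpha G T = ∑ U : Finset (Fin n), cw G U T := by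
  by_cases hT : Acyclic G T
  · obtain ⟨v0, hv0⟩ := exists_source G hn hT
    set W : Finset (Fin n) := Finset.univ.filter (fun v => ∀ g ∈ T, (G g).2 ≠ v) with hW
    have hWne : W.Nonempty := ⟨v0, Finset.mem_filter.mpr ⟨Finset.mem_univ _, hv0⟩⟩
    have hUc : ∀ U : Finset (Fin n), (∀ g ∈ T, (G g).2 ∉ U) ↔ U ⊆ W := by
      intro U
      constructor
      · intro h x hx
        exact Finset.mem_filter.mpr ⟨Finset.mem_univ _, fun g hg hEq => h g hg (hEq ▸ hx)⟩
      · intro h g hg hgU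
        exact (Finset.mem_filter.mp (h hgU)).2 g hg rfl
    have hpt : ∀ U : Finset (Fin n), cw G U T =
        if U ∈ W.powerset.filter (fun U => U.Nonempty) then (-1)^(U.card+1) * alpha G T
        else 0 := by
      intro U
      unfold cw
      refine if_congr ?_ rfl rfl
      simp only [Finset.mem_filter, Finset.mem_powerset]
      rw [hUc U, and_comm]
    have hsum1 : ∑ U ∈ W.powerset.filter (fun U => U.Nonempty), (-1:ℤ)^(U.card+1) = 1 := by
      have hsplit := Finset.sum_filter_add_sum_filter_not W.powerset (fun U => U.Nonempty)
        (fun U => (-1:ℤ)^U.card)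
      rw [Finset.sum_powerset_neg_one_pow_card_of_nonempty hWne] at hsplit
      have hempty : W.powerset.filter (fun U => ¬ U.Nonempty) = {∅} := by
        ext U
        simp only [Finset.mem_filter, Finset.mem_powerset, Finset.not_nonempty_iff_eq_empty,
          Finset.mem_singleton]
        constructor
        · exact fun h => h.2
        · rintro rfl; exact ⟨Finset.empty_subset W, rfl⟩
      rw [hempty, Finset.sum_singleton, Finset.card_empty, pow_zero] at hsplit
      have hval : ∑ U ∈ W.powerset.filter (fun U => U.Nonempty), (-1:ℤ)^U.card = -1 := by
        linarith
      calc ∑ U ∈ W.powerset.filter (fun U => U.Nonempty), (-1:ℤ)^(U.card+1)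
          = ∑ U ∈ W.powerset.filter (fun U => U.Nonempty), (-1:ℤ)^U.card * (-1) := by
            apply Finset.sum_congr rfl
            intro U _
            rw [pow_succ]
        _ = (∑ U ∈ W.powerset.filter (fun U => U.Nonempty), (-1:ℤ)^U.card) * (-1) :=
            (Finset.sum_mul _ _ _).symm
        _ = 1 := by rw [hval]; ring
    calc alpha G T = (∑ U ∈ W.powerset.filter (fun U => U.Nonempty), (-1:ℤ)^(U.card+1))
          * alpha G T := by rw [hsum1, one_mul]
      _ = ∑ U ∈ W.powerset.filter (fun U => U.Nonempty), (-1:ℤ)^(U.card+1) * alpha G T :=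
          Finset.sum_mul _ _ _
      _ = ∑ U : Finset (Fin n),
            (if U ∈ W.powerset.filter (fun U => U.Nonempty) then (-1:ℤ)^(U.card+1) * alpha G T
             else 0) := by
          rw [Finset.sum_ite_mem, Finset.univ_inter]
      _ = ∑ U : Finset (Fin n), cw G U T := by
          apply Finset.sum_congr rfl
          intro U _
          rw [hpt U]
  · have h1 : ∀ U : Finset (Fin n), cw G U T = 0 := by
      intro U
      simp [cw, alpha, hT]
    rw [alpha, if_neg hT]
    exact (Finset.sum_eq_zero fun U _ => h1 U).symm

lemma cw_col (G : DG n k) (hn : 1 ≤ n) (hG : StronglyConnected G Finset.univ)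
    (U : Finset (Fin n)) :
    ∑ T : Finset (Fin k), cw G U T = if U = Finset.univ then (-1:ℤ)^(n+1) else 0 := by
  by_cases hUne : U.Nonempty
  · by_cases hUu : U = Finset.univ
    · subst hUu
      rw [if_pos rfl]
      have hpt : ∀ T : Finset (Fin k), cw G Finset.univ T =
          if T = (∅ : Finset (Fin k)) then (-1:ℤ)^(n+1) else 0 := by
        intro T
        rcases Finset.eq_empty_or_nonempty T with rfl | ⟨g, hg⟩
        · rw [if_pos rfl]
          unfold cw
          rw [if_pos ⟨hUne, fun g hg => absurd hg (Finset.notMem_empty g)⟩, alpha_empty,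
            mul_one, Finset.card_univ, Fintype.card_fin]
        · rw [if_neg (Finset.nonempty_iff_ne_empty.mp ⟨g, hg⟩)]
          unfold cw
          rw [if_neg]
          rintro ⟨-, h2⟩
          exact h2 g hg (Finset.mem_univ _)
      calc ∑ T : Finset (Fin k), cw G Finset.univ T
          = ∑ T : Finset (Fin k), (if T = (∅ : Finset (Fin k)) then (-1:ℤ)^(n+1) else 0) :=
            Finset.sum_congr rfl fun T _ => hpt T
        _ = (-1:ℤ)^(n+1) := by simp
    · rw [if_neg hUu]
      obtain ⟨u, hu⟩ := id hUne
      obtain ⟨v, hv⟩ : ∃ v, v ∉ U := by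
        by_contra h
        push_neg at h
        exact hUu (Finset.eq_univ_iff_forall.mpr h)
      obtain ⟨g0, hg1, hg2⟩ := exists_crossing G (hG u v) hu hv
      have hmain : ∑ T ∈ Finset.univ.filter
          (fun T : Finset (Fin k) => ∀ g ∈ T, (G g).2 ∉ U), alpha G T = 0 := by
        apply sum_alpha_zero G g0
        · intro T hT g hg
          rcases Finset.mem_insert.mp hg with rfl | hgT
          · exact hg2
          · exact hT g hgT
        · intro T hT g hg
          exact hT g (Finset.mem_of_mem_erase hg)
        · intro T hT _ hr
          exact hg2 (mem_of_rtg_heads G hT hr hg1)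
      calc ∑ T : Finset (Fin k), cw G U T
          = ∑ T : Finset (Fin k),
              (if T ∈ Finset.univ.filter (fun T : Finset (Fin k) => ∀ g ∈ T, (G g).2 ∉ U)
               then (-1:ℤ)^(U.card+1) * alpha G T else 0) := by
            apply Finset.sum_congr rfl
            intro T _
            unfold cw
            refine if_congr ?_ rfl rfl
            simp only [Finset.mem_filter, Finset.mem_univ, true_and]
            exact and_iff_right hUne
        _ = ∑ T ∈ Finset.univ.filter (fun T : Finset (Fin k) => ∀ g ∈ T, (G g).2 ∉ U),
              (-1:ℤ)^(U.card+1) * alpha G T := by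
            rw [Finset.sum_ite_mem, Finset.univ_inter]
        _ = (-1:ℤ)^(U.card+1) * ∑ T ∈ Finset.univ.filter
              (fun T : Finset (Fin k) => ∀ g ∈ T, (G g).2 ∉ U), alpha G T :=
            (Finset.mul_sum _ _ _).symm
        _ = 0 := by rw [hmain, mul_zero]
  · have hU : U = ∅ := Finset.not_nonempty_iff_eq_empty.mp hUne
    subst hU
    rw [if_neg]
    · refine Finset.sum_eq_zero fun T _ => ?_
      unfold cw
      rw [if_neg]
      rintro ⟨h, -⟩
      exact Finset.not_nonempty_empty h
    · intro h
      haveI : Nonempty (Fin n) := ⟨⟨0, hn⟩⟩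
      exact Finset.not_nonempty_empty (h.symm ▸ Finset.univ_nonempty)

lemma total_sum (hn : 1 ≤ n) (G : DG n k) (hG : StronglyConnected G Finset.univ) :
    ∑ S : Finset (Fin k), alpha G S = (-1:ℤ)^(n+1) := by
  calc ∑ S : Finset (Fin k), alpha G S
      = ∑ S : Finset (Fin k), ∑ U : Finset (Fin n), cw G U S :=
        Finset.sum_congr rfl fun S _ => cw_row G hn S
    _ = ∑ U : Finset (Fin n), ∑ S : Finset (Fin k), cw G U S := Finset.sum_comm
    _ = ∑ U : Finset (Fin n), (if U = Finset.univ then (-1:ℤ)^(n+1) else 0) :=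
        Finset.sum_congr rfl fun U _ => cw_col G hn hG U
    _ = (-1:ℤ)^(n+1) := by simp

end Aux

/-- crucial edge case. Let `G` be strongly connected and `e` a crucial
edge (deleting `e` destroys strong connectivity). Then `∑_{H⊆G, e∉H} α(H) = 0` and
`∑_{H⊆G, e∈H} α(H) = (−1)^k σ(G) = (−1)^{k+β₁(G)}` (note
`(−1)^{k+β₁(G)} = (−1)^{n+β₀(G)}` since `β₁ = k − n + β₀`). -/
theorem crucial_edge (n k : ℕ) (hn : 1 ≤ n) (G : DG n k) (e : Fin k)
    (hG : DG.StronglyConnected G Finset.univ)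
    (hcr : ¬ DG.StronglyConnected G (Finset.univ.erase e)) :
    (∑ S ∈ Finset.univ.filter (fun S : Finset (Fin k) => e ∉ S), DG.alpha G S) = 0
    ∧ (∑ S ∈ Finset.univ.filter (fun S : Finset (Fin k) => e ∈ S), DG.alpha G S)
        = (-1) ^ k * DG.sigma G Finset.univ
    ∧ (-1 : ℤ) ^ k * DG.sigma G Finset.univ
        = (-1) ^ (n + DG.beta0 G Finset.univ) := by
  have hSSC : DG.SSC G Finset.univ := fun g _ => hG _ _
  have hbeta : DG.beta0 G Finset.univ = 1 := by
    rw [DG.beta0, Nat.card_eq_one_iff_unique]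
    refine ⟨⟨?_⟩, ⟨Quot.mk _ ⟨0, hn⟩⟩⟩
    have key : ∀ x y : Fin n,
        Quot.mk (DG.adj G Finset.univ) x = Quot.mk (DG.adj G Finset.univ) y := by
      intro x y
      have h := hG x y
      induction h with
      | refl => rfl
      | @tail b c _ hbc ih =>
        obtain ⟨g, hg, hge⟩ := hbc
        exact ih.trans (Quot.sound ⟨g, hg, Or.inl hge⟩)
    intro x y
    induction x using Quot.ind with | _ a => ?_
    induction y using Quot.ind with | _ b => ?_
    exact key a b
  have part3 : (-1:ℤ)^k * DG.sigma G Finset.univ = (-1)^(n + DG.beta0 G Finset.univ) := by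
    rw [DG.sigma, if_pos hSSC, Finset.card_univ, Fintype.card_fin, ← pow_add]
    have h2 : k + (k + n + DG.beta0 G Finset.univ) = 2*k + (n + DG.beta0 G Finset.univ) := by
      ring
    rw [h2, pow_add, pow_mul]
    norm_num
  have hfex : ∃ f : Fin k, f ≠ e ∧
      ¬ Relation.ReflTransGen (DG.step G (Finset.univ.erase e)) (G f).2 (G f).1 := by
    by_contra hno
    push_neg at hno
    have hsymm : ∀ x y : Fin n,
        Relation.ReflTransGen (DG.step G (Finset.univ.erase e)) x y →
        Relation.ReflTransGen (DG.step G (Finset.univ.erase e)) y x := by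
      intro x y h
      induction h with
      | refl => exact Relation.ReflTransGen.refl
      | @tail b c _ hbc ih =>
        obtain ⟨g, hg, hge⟩ := hbc
        have hgr := hno g (Finset.ne_of_mem_erase hg)
        rw [hge] at hgr
        exact hgr.trans ih
    have hba : Relation.ReflTransGen (DG.step G (Finset.univ.erase e)) (G e).2 (G e).1 := by
      have key : ∀ u : Fin n, Relation.ReflTransGen (DG.step G Finset.univ) u (G e).1 →
          Relation.ReflTransGen (DG.step G (Finset.univ.erase e)) u (G e).1 := by
        intro u h
        induction h using Relation.ReflTransGen.head_induction_on with
        | refl => exact Relation.ReflTransGen.refl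
        | @head x c hstep htl ih =>
          obtain ⟨g, -, hge⟩ := hstep
          by_cases hg : g = e
          · subst hg
            have h1 : (G g).1 = x := congrArg Prod.fst hge
            rw [h1]
          · exact Relation.ReflTransGen.head
              ⟨g, Finset.mem_erase.mpr ⟨hg, Finset.mem_univ g⟩, hge⟩ ih
      exact key (G e).2 (hG (G e).2 (G e).1)
    have hab := hsymm _ _ hba
    apply hcr
    intro u v
    have h := hG u v
    induction h with
    | refl => exact Relation.ReflTransGen.refl
    | @tail b c _ hbc ih =>
      obtain ⟨g, -, hge⟩ := hbc
      by_cases hg : g = e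
      · subst hg
        have hb : (G g).1 = b := congrArg Prod.fst hge
        have hc : (G g).2 = c := congrArg Prod.snd hge
        rw [← hb] at ih
        rw [← hc]
        exact ih.trans hab
      · exact ih.tail ⟨g, Finset.mem_erase.mpr ⟨hg, Finset.mem_univ g⟩, hge⟩
  obtain ⟨f, hfe, hfnr⟩ := hfex
  have part1 : (∑ S ∈ Finset.univ.filter (fun S : Finset (Fin k) => e ∉ S), DG.alpha G S)
      = 0 := by
    apply sum_alpha_zero G f (fun T => e ∉ T)
    · intro T hT hmem
      rcases Finset.mem_insert.mp hmem with h | h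
      · exact hfe h.symm
      · exact hT h
    · intro T hT hmem
      exact hT (Finset.mem_of_mem_erase hmem)
    · intro T hT hfT hr
      apply hfnr
      refine Relation.ReflTransGen.mono ?_ _ _ hr
      rintro x y ⟨g, hg, hge⟩
      exact ⟨g, Finset.mem_erase.mpr ⟨fun hge' => hT (hge' ▸ hg), Finset.mem_univ g⟩, hge⟩
  have htot := total_sum hn G hG
  have hsplit := Finset.sum_filter_add_sum_filter_not Finset.univ
    (fun S : Finset (Fin k) => e ∈ S) (DG.alpha G)
  have part2 : (∑ S ∈ Finset.univ.filter (fun S : Finset (Fin k) => e ∈ S), DG.alpha G S)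
      = (-1:ℤ)^k * DG.sigma G Finset.univ := by
    rw [part3, hbeta]
    rw [part1, add_zero, htot] at hsplit
    exact hsplit
  exact ⟨part1, part2, part3⟩
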